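/- The translated formula φ is intuitionistically provable if and only if P entails Ω under stable model semantics, where φ = ψ₁ → ⋯ → ψ_d → ⊙ and ψ₁,…,ψ_d are the axioms of the construction. -/

import Mathlib

namespace ASP

/-- A ground clause `head ← pos, ¬neg` of an answer set program. -/
structure GClause (α : Type) where
  head : α
  pos : List α
  neg : List α

variable {α : Type}

/-- Immediate-consequence operator of the Gelfond–Lifschitz reduct `P^M`:
`F(I) = I ∪ {a | some clause a ← a₁,…,aₙ of P^M has all aᵢ ∈ I}`. -/
def tcons (P : Set (GClause α)) (M : Set α) : Set α →o Set α where
  toFun I := I ∪ {a | ∃ c ∈ P, c.head = a ∧ (∀ b ∈ c.pos, b ∈ I) ∧ (∀ b ∈ c.neg, b ∉ M)}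
  monotone' := by
    intro I J h x hx
    rcases hx with hx | ⟨c, hc, h1, h2, h3⟩
    · exact Or.inl (h hx)
    · exact Or.inr ⟨c, hc, h1, fun b hb => h (h2 b hb), h3⟩

/-- The interpretation `I(P,M)`: least fixed point of the immediate-consequence
operator of the reduct `P^M`. -/
def interp (P : Set (GClause α)) (M : Set α) : Set α := OrderHom.lfp (tcons P M)

/-- `M` is a stable model (answer set) of `P` iff `M = I(P,M)`. -/
def IsStable (P : Set (GClause α)) (M : Set α) : Prop := M = interp P M

end ASP
namespace ASP

/-- Formulas of minimal implicational propositional logic over atoms `α`. -/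
inductive PForm (α : Type) where
  | at_ : α → PForm α
  | imp : PForm α → PForm α → PForm α

/-- Provability in minimal propositional logic (only → introduction/elimination). -/
inductive PPrv {α : Type} : Set (PForm α) → PForm α → Prop
  | ax {Γ : Set (PForm α)} {φ : PForm α} : φ ∈ Γ → PPrv Γ φ
  | impI {Γ : Set (PForm α)} {φ ψ : PForm α} : PPrv (insert φ Γ) ψ → PPrv Γ (.imp φ ψ)
  | impE {Γ : Set (PForm α)} {φ ψ : PForm α} : PPrv Γ (.imp φ ψ) → PPrv Γ φ → PPrv Γ ψ

end ASP
namespace TR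

/-- A ground atom `R(c̄)`: predicate index plus constant arguments. -/
structure GA where
  pred : ℕ
  args : List ℕ
deriving DecidableEq

/-- Atom alphabet of the translated formula φ: for every program predicate `R`
there are `R`, `R̄`, `R!`, `R?`; pair predicates `RP`; clause predicates `K⁰`
and nullary `K̄⁰`; and the nullary `•, ∘, A, B, ⊙`. -/
inductive At where
  | pos : GA → At
  | bar : GA → At
  | bang : GA → At
  | quest : GA → At
  | mem : GA → GA → At
  | k : ℕ → List ℕ → At
  | kbar : ℕ → At
  | bullet : At
  | circ : At
  | unsound : At
  | incomplete : At
  | lup : At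
deriving DecidableEq

abbrev F := ASP.PForm At

def av (a : At) : F := .at_ a

def imps (l : List F) (t : F) : F := l.foldr ASP.PForm.imp t

/-- Axioms (1): `(R(c̄)→⊙) → (R̄(c̄)→⊙) → ⊙`. -/
def ax1 (B : Set GA) : Set F :=
  {f | ∃ a ∈ B, f = .imp (.imp (av (.pos a)) (av .lup)) (.imp (.imp (av (.bar a)) (av .lup)) (av .lup))}

/-- Axioms (2): `Ω→⊙`, `A→⊙`, `B→⊙`. -/
def ax2 (ω : GA) : Set F :=
  {.imp (av (.pos ω)) (av .lup), .imp (av .unsound) (av .lup), .imp (av .incomplete) (av .lup)}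

/-- Axioms (3): `R̄(c̄) → (R!(c̄)→•) → A`. -/
def ax3 (B : Set GA) : Set F :=
  {f | ∃ a ∈ B, f = .imp (av (.bar a)) (.imp (.imp (av (.bang a)) (av .bullet)) (av .unsound))}

/-- Axioms (4): `R(c̄) → (R?(c̄)→∘) → B`. -/
def ax4 (B : Set GA) : Set F :=
  {f | ∃ a ∈ B, f = .imp (av (.pos a)) (.imp (.imp (av (.quest a)) (av .circ)) (av .incomplete))}

/-- Axiom (5) for a ground clause `R(ē) ← P₁(c̄₁),…,P_r(c̄_r), ¬S₁(d̄₁),…,¬S_s(d̄_s)`: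
`R!(ē) → (P₁!(c̄₁)→•) → ⋯ → (P_r!(c̄_r)→•) → S̄₁(d̄₁) → ⋯ → S̄_s(d̄_s) → •`. -/
def clax (c : ASP.GClause GA) : F :=
  .imp (av (.bang c.head))
    (imps (c.pos.map (fun b => .imp (av (.bang b)) (av .bullet)) ++
           c.neg.map (fun s => av (.bar s))) (av .bullet))

def ax5 (Pg : List (ASP.GClause GA)) : Set F := {f | ∃ c ∈ Pg, f = clax c}

/-- Axioms (6): `R?(c̄) → (K⁰₁(c̄)→K̄⁰₁) → ⋯ → (K⁰_l(c̄)→K̄⁰_l) → ∘`,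
where K₁,…,K_l are all clauses whose target predicate is that of the atom. -/
def ax6 (Pg : List (ASP.GClause GA)) (B : Set GA) : Set F :=
  {f | ∃ a ∈ B, f = .imp (av (.quest a))
    (imps (((Pg.zipIdx.map Prod.swap).filter (fun jc => jc.2.head.pred == a.pred)).map
      (fun jc => ASP.PForm.imp (av (.k jc.1 a.args)) (av (.kbar jc.1)))) (av .circ))}

/-- Axioms (7)-(8): a mismatch between the queried arguments and the clause head
arguments immediately yields `K⁰(c̄) → K̄⁰`. -/
def ax7 (Pg : List (ASP.GClause GA)) (B : Set GA) : Set F :=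
  {f | ∃ jc ∈ (Pg.zipIdx.map Prod.swap), ∃ a ∈ B, a.pred = jc.2.head.pred ∧ a.args ≠ jc.2.head.args ∧
    f = .imp (av (.k jc.1 a.args)) (av (.kbar jc.1))}

/-- Axioms (10): `K⁰(ē) → (P?(c̄) → RP(ē,c̄) → ∘) → K̄⁰`, for each positive body atom. -/
def ax10 (Pg : List (ASP.GClause GA)) : Set F :=
  {f | ∃ jc ∈ (Pg.zipIdx.map Prod.swap), ∃ b ∈ jc.2.pos, f = .imp (av (.k jc.1 jc.2.head.args))
    (.imp (.imp (av (.quest b)) (.imp (av (.mem jc.2.head b)) (av .circ))) (av (.kbar jc.1)))}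

/-- Axioms (11): `K⁰(ē) → S(d̄) → K̄⁰`, for each negative body atom `¬S(d̄)`. -/
def ax11 (Pg : List (ASP.GClause GA)) : Set F :=
  {f | ∃ jc ∈ (Pg.zipIdx.map Prod.swap), ∃ s ∈ jc.2.neg, f = .imp (av (.k jc.1 jc.2.head.args))
    (.imp (av (.pos s)) (av (.kbar jc.1)))}

/-- Axioms (12): transitivity `RP(ā,b̄) → PQ(b̄,c̄) → (RQ(ā,c̄)→∘) → ∘`. -/
def ax12 (B : Set GA) : Set F :=
  {f | ∃ a ∈ B, ∃ b ∈ B, ∃ c ∈ B, f = .imp (av (.mem a b)) (.imp (av (.mem b c))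
    (.imp (.imp (av (.mem a c)) (av .circ)) (av .circ)))}

/-- Axioms (13): loop detection `PP(ā,ā) → ∘`. -/
def ax13 (B : Set GA) : Set F := {f | ∃ a ∈ B, f = .imp (av (.mem a a)) (av .circ)}

/-- All axioms of the translated formula φ. -/
def Axioms (Pg : List (ASP.GClause GA)) (B : Set GA) (ω : GA) : Set F :=
  ax1 B ∪ ax2 ω ∪ ax3 B ∪ ax4 B ∪ ax5 Pg ∪ ax6 Pg B ∪ ax7 Pg B ∪
    ax10 Pg ∪ ax11 Pg ∪ ax12 B ∪ ax13 B

/-- `Γ_M`: the union of `M ∪ M̄` with the axioms of φ. -/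
def GammaM (Pg : List (ASP.GClause GA)) (B : Set GA) (ω : GA) (M : Set GA) : Set F :=
  Axioms Pg B ω ∪ {f | ∃ a ∈ M, f = av (.pos a)} ∪ {f | ∃ a ∈ B, a ∉ M ∧ f = av (.bar a)}

/-- The implicational formula of a clause of `P̄` (negative atoms replaced by barred ones). -/
def cbarF (c : ASP.GClause GA) : F :=
  imps (c.pos.map (fun b => av (.pos b)) ++ c.neg.map (fun s => av (.bar s))) (av (.pos c.head))

/-- The environment `P̄ ∪ M̄`. -/
def PbarMbar (Pg : List (ASP.GClause GA)) (B : Set GA) (M : Set GA) : Set F :=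
  {f | ∃ c ∈ Pg, f = cbarF c} ∪ {f | ∃ a ∈ B, a ∉ M ∧ f = av (.bar a)}

def progSet (Pg : List (ASP.GClause GA)) : Set (ASP.GClause GA) := {c | c ∈ Pg}

/-- All atoms of the program lie in the Herbrand base `B`. -/
def WfProg (Pg : List (ASP.GClause GA)) (B : Set GA) : Prop :=
  ∀ c ∈ Pg, c.head ∈ B ∧ (∀ b ∈ c.pos, b ∈ B) ∧ (∀ s ∈ c.neg, s ∈ B)

end TR

namespace PF
open ASP TR Classical

theorem mono {α : Type} {Γ Δ : Set (ASP.PForm α)} {φ : ASP.PForm α}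
    (h : ASP.PPrv Γ φ) (hs : Γ ⊆ Δ) : ASP.PPrv Δ φ := by
  induction h generalizing Δ with
  | ax h => exact .ax (hs h)
  | impI h ih => exact .impI (ih (Set.insert_subset_insert hs))
  | impE h1 h2 ih1 ih2 => exact .impE (ih1 hs) (ih2 hs)

theorem imps_elim {Γ : Set TR.F} {l : List TR.F} {t : TR.F}
    (h : ASP.PPrv Γ (TR.imps l t)) (hl : ∀ f ∈ l, ASP.PPrv Γ f) : ASP.PPrv Γ t := by
  induction l with
  | nil => exact h
  | cons a l ih =>
    exact ih (ASP.PPrv.impE h (hl a (List.mem_cons_self)))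
      (fun f hf => hl f (List.mem_cons_of_mem _ hf))

def evalF (v : TR.At → Prop) : TR.F → Prop
  | .at_ a => v a
  | .imp f g => evalF v f → evalF v g

theorem sound {v : TR.At → Prop} : ∀ {Γ : Set TR.F} {φ : TR.F},
    ASP.PPrv Γ φ → (∀ ψ ∈ Γ, evalF v ψ) → evalF v φ := by
  intro Γ φ h
  induction h with
  | ax h => exact fun hΓ => hΓ _ h
  | impI h ih =>
    intro hΓ hφ
    exact ih (fun ψ hψ => (Set.mem_insert_iff.mp hψ).elim (fun e => e ▸ hφ) (hΓ ψ))
  | impE h1 h2 ih1 ih2 => intro hΓ; exact ih1 hΓ (ih2 hΓ)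

theorem evalF_imps {v : TR.At → Prop} {l : List TR.F} {t : TR.F} :
    evalF v (TR.imps l t) ↔ ((∀ f ∈ l, evalF v f) → evalF v t) := by
  induction l with
  | nil => simp [TR.imps, evalF]
  | cons a l ih =>
    constructor
    · intro h hall
      exact ih.mp (h (hall a (List.mem_cons_self)))
        (fun f hf => hall f (List.mem_cons_of_mem _ hf))
    · intro h ha
      refine ih.mpr (fun hl => h ?_)
      intro f hf
      rcases List.mem_cons.mp hf with rfl | hf
      · exact ha
      · exact hl f hf

variable {α : Type}

def approx (P : Set (ASP.GClause α)) (M : Set α) : ℕ → Set α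
  | 0 => ∅
  | n+1 => ASP.tcons P M (approx P M n)

theorem approx_subset_succ (P : Set (ASP.GClause α)) (M : Set α) :
    ∀ n, approx P M n ⊆ approx P M (n+1)
  | 0 => by intro x hx; exact hx.elim
  | n+1 => (ASP.tcons P M).mono (approx_subset_succ P M n)

theorem approx_mono (P : Set (ASP.GClause α)) (M : Set α) {m n : ℕ} (h : m ≤ n) :
    approx P M m ⊆ approx P M n := by
  induction h with
  | refl => exact subset_rfl
  | step _ ih => exact ih.trans (approx_subset_succ P M _)

theorem approx_subset_interp (P : Set (ASP.GClause α)) (M : Set α) :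
    ∀ n, approx P M n ⊆ ASP.interp P M
  | 0 => by intro x hx; exact hx.elim
  | n+1 => by
    have h1 : ASP.tcons P M (approx P M n) ⊆ ASP.tcons P M (ASP.interp P M) :=
      (ASP.tcons P M).mono (approx_subset_interp P M n)
    have h2 : ASP.tcons P M (ASP.interp P M) = ASP.interp P M := OrderHom.map_lfp _
    exact h2 ▸ h1

theorem list_bound (P : Set (ASP.GClause α)) (M : Set α) (l : List α)
    (h : ∀ b ∈ l, b ∈ ⋃ n, approx P M n) : ∃ N, ∀ b ∈ l, b ∈ approx P M N := by
  induction l with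
  | nil => exact ⟨0, by simp⟩
  | cons a l ih =>
    obtain ⟨N, hN⟩ := ih (fun b hb => h b (List.mem_cons_of_mem _ hb))
    obtain ⟨na, hna⟩ := Set.mem_iUnion.mp (h a (List.mem_cons_self))
    refine ⟨max na N, fun b hb => ?_⟩
    rcases List.mem_cons.mp hb with rfl | hb
    · exact approx_mono P M (le_max_left _ _) hna
    · exact approx_mono P M (le_max_right _ _) (hN b hb)

theorem interp_subset_iUnion (P : Set (ASP.GClause α)) (M : Set α) :
    ASP.interp P M ⊆ ⋃ n, approx P M n := by
  refine OrderHom.lfp_le _ ?_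
  intro x hx
  rcases hx with hx | ⟨c, hc, hh, h1, h2⟩
  · exact hx
  · obtain ⟨N, hN⟩ := list_bound P M c.pos h1
    exact Set.mem_iUnion.mpr ⟨N+1, Or.inr ⟨c, hc, hh, hN, h2⟩⟩

noncomputable def rank (P : Set (ASP.GClause α)) (M : Set α) (a : α) : ℕ :=
  if h : ∃ n, a ∈ approx P M n then Nat.find h else 0

theorem interp_spec {P : Set (ASP.GClause α)} {M : Set α} {a : α}
    (ha : a ∈ ASP.interp P M) :
    ∃ c ∈ P, c.head = a ∧ (∀ b ∈ c.pos, b ∈ ASP.interp P M ∧ rank P M b < rank P M a) ∧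
      ∀ s ∈ c.neg, s ∉ M := by
  have hex : ∃ n, a ∈ approx P M n := Set.mem_iUnion.mp (interp_subset_iUnion P M ha)
  have hra : rank P M a = Nat.find hex := dif_pos hex
  have hfind : a ∈ approx P M (Nat.find hex) := Nat.find_spec hex
  rcases hn : Nat.find hex with _ | m
  · rw [hn] at hfind; exact hfind.elim
  · rw [hn] at hfind
    rcases hfind with hfind | ⟨c, hc, hh, h1, h2⟩
    · exact absurd hfind (Nat.find_min hex (by omega))
    · refine ⟨c, hc, hh, fun b hb => ⟨approx_subset_interp P M m (h1 b hb), ?_⟩, h2⟩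
      have hbex : ∃ n, b ∈ approx P M n := ⟨m, h1 b hb⟩
      have : rank P M b = Nat.find hbex := dif_pos hbex
      rw [this, hra, hn]
      exact Nat.lt_succ_of_le (Nat.find_le (h1 b hb))

theorem interp_subset_heads (P : Set (ASP.GClause α)) (M : Set α) :
    ASP.interp P M ⊆ {a | ∃ c ∈ P, c.head = a} := by
  refine OrderHom.lfp_le _ ?_
  rintro x (hx | ⟨c, hc, hh, -, -⟩)
  · exact hx
  · exact ⟨c, hc, hh⟩

theorem enum_iff {β : Type} {l : List β} {j : ℕ} {c : β} :
    (j, c) ∈ (l.zipIdx.map Prod.swap) ↔ l[j]? = some c := by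
  constructor
  · intro h
    obtain ⟨⟨x, i⟩, hm, he⟩ := List.mem_map.mp h
    simp only [Prod.swap, Prod.mk.injEq] at he
    obtain ⟨rfl, rfl⟩ := he
    exact List.mk_mem_zipIdx_iff_getElem?.mp hm
  · intro h
    exact List.mem_map.mpr ⟨(c, j), List.mk_mem_zipIdx_iff_getElem?.mpr h, rfl⟩

theorem enum_fun {β : Type} {l : List β} {j : ℕ} {c c' : β}
    (h : (j, c) ∈ (l.zipIdx.map Prod.swap)) (h' : (j, c') ∈ (l.zipIdx.map Prod.swap)) : c = c' := by
  rw [enum_iff] at h h'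
  rw [h] at h'; exact Option.some_inj.mp h'

theorem enum_mem {β : Type} {l : List β} {j : ℕ} {c : β} (h : (j, c) ∈ (l.zipIdx.map Prod.swap)) : c ∈ l :=
  List.mem_of_getElem? (enum_iff.mp h)

theorem enum_of_mem {β : Type} {l : List β} {c : β} (h : c ∈ l) : ∃ j, (j, c) ∈ (l.zipIdx.map Prod.swap) := by
  obtain ⟨j, hj, rfl⟩ := List.mem_iff_getElem.mp h
  exact ⟨j, enum_iff.mpr (List.getElem?_eq_getElem hj)⟩

theorem GA_ext {x y : TR.GA} (h1 : x.pred = y.pred) (h2 : x.args = y.args) : x = y := by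
  cases x; cases y; simp_all

end PF

namespace PF
open ASP TR Classical

variable (Pg : List (ASP.GClause TR.GA)) (B : Set TR.GA) (ω : TR.GA)

theorem ax1_sub : TR.ax1 B ⊆ TR.Axioms Pg B ω := by
  intro f hf; simp only [TR.Axioms, Set.mem_union]; tauto
theorem ax2_sub : TR.ax2 ω ⊆ TR.Axioms Pg B ω := by
  intro f hf; simp only [TR.Axioms, Set.mem_union]; tauto
theorem ax3_sub : TR.ax3 B ⊆ TR.Axioms Pg B ω := by
  intro f hf; simp only [TR.Axioms, Set.mem_union]; tauto
theorem ax4_sub : TR.ax4 B ⊆ TR.Axioms Pg B ω := by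
  intro f hf; simp only [TR.Axioms, Set.mem_union]; tauto
theorem ax5_sub : TR.ax5 Pg ⊆ TR.Axioms Pg B ω := by
  intro f hf; simp only [TR.Axioms, Set.mem_union]; tauto
theorem ax6_sub : TR.ax6 Pg B ⊆ TR.Axioms Pg B ω := by
  intro f hf; simp only [TR.Axioms, Set.mem_union]; tauto
theorem ax7_sub : TR.ax7 Pg B ⊆ TR.Axioms Pg B ω := by
  intro f hf; simp only [TR.Axioms, Set.mem_union]; tauto
theorem ax10_sub : TR.ax10 Pg ⊆ TR.Axioms Pg B ω := by
  intro f hf; simp only [TR.Axioms, Set.mem_union]; tauto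
theorem ax11_sub : TR.ax11 Pg ⊆ TR.Axioms Pg B ω := by
  intro f hf; simp only [TR.Axioms, Set.mem_union]; tauto
theorem ax12_sub : TR.ax12 B ⊆ TR.Axioms Pg B ω := by
  intro f hf; simp only [TR.Axioms, Set.mem_union]; tauto
theorem ax13_sub : TR.ax13 B ⊆ TR.Axioms Pg B ω := by
  intro f hf; simp only [TR.Axioms, Set.mem_union]; tauto

/-- Countermodel valuation for a stable model `M` not containing `ω`. -/
def val (Pg : List (ASP.GClause TR.GA)) (M : Set TR.GA) : TR.At → Prop
  | .pos a => a ∈ M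
  | .bar a => a ∉ M
  | .bang a => a ∉ M
  | .quest a => a ∈ M
  | .mem a b => a ∈ M ∧ b ∈ M ∧
      rank (TR.progSet Pg) M b < rank (TR.progSet Pg) M a
  | .k j args => ∃ c, (j, c) ∈ (Pg.zipIdx.map Prod.swap) ∧ args = c.head.args
  | .kbar j => ¬ ∃ c, (j, c) ∈ (Pg.zipIdx.map Prod.swap) ∧ c.head ∈ M ∧
      (∀ b ∈ c.pos, b ∈ M ∧ rank (TR.progSet Pg) M b < rank (TR.progSet Pg) M c.head) ∧
      (∀ s ∈ c.neg, s ∉ M)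
  | _ => False

theorem forward (hprv : ASP.PPrv (TR.Axioms Pg B ω) (TR.av .lup))
    (M : Set TR.GA) (hst : ASP.IsStable (TR.progSet Pg) M) (hωM : ω ∉ M) : False := by
  have hMI : M = ASP.interp (TR.progSet Pg) M := hst
  set v := val Pg M with hv
  have hclose : ∀ c ∈ Pg, (∀ b ∈ c.pos, b ∈ M) → (∀ s ∈ c.neg, s ∉ M) → c.head ∈ M := by
    intro c hc h1 h2
    rw [hMI, ASP.interp, ← OrderHom.map_lfp]
    refine Or.inr ⟨c, hc, rfl, fun b hb => ?_, h2⟩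
    have := h1 b hb; rwa [hMI, ASP.interp] at this
  have hax : ∀ ψ ∈ TR.Axioms Pg B ω, evalF v ψ := by
    intro ψ hψ
    simp only [TR.Axioms, Set.mem_union] at hψ
    rcases hψ with (((((((((h | h) | h) | h) | h) | h) | h) | h) | h) | h) | h
    · -- ax1
      obtain ⟨a, _, rfl⟩ := h
      intro h1 h2
      by_cases haM : a ∈ M
      · exact h1 haM
      · exact h2 haM
    · -- ax2
      rcases h with rfl | rfl | rfl
      · exact fun h => hωM h
      · exact fun h => h
      · exact fun h => h
    · -- ax3
      obtain ⟨a, _, rfl⟩ := h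
      intro h1 h2
      exact h2 h1
    · -- ax4
      obtain ⟨a, _, rfl⟩ := h
      intro h1 h2
      exact h2 h1
    · -- ax5
      obtain ⟨c, hc, rfl⟩ := h
      simp only [TR.clax]
      intro hbang
      rw [evalF_imps]
      intro hall
      refine hbang (hclose c hc ?_ ?_)
      · intro b hb
        have := hall (ASP.PForm.imp (TR.av (.bang b)) (TR.av .bullet))
          (List.mem_append_left _ (List.mem_map.mpr ⟨b, hb, rfl⟩))
        by_contra hbM
        exact this hbM
      · intro s hs
        exact hall (TR.av (.bar s)) (List.mem_append_right _ (List.mem_map.mpr ⟨s, hs, rfl⟩))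
    · -- ax6
      obtain ⟨a, haB, rfl⟩ := h
      intro hquest
      show evalF v (TR.imps _ _)
      rw [evalF_imps]
      intro hall
      have haI : a ∈ ASP.interp (TR.progSet Pg) M := by rwa [← hMI]
      obtain ⟨c, hc, hh, hpos, hneg⟩ := interp_spec haI
      obtain ⟨j, hj⟩ := enum_of_mem (l := Pg) hc
      have hmem : (ASP.PForm.imp (TR.av (.k j a.args)) (TR.av (.kbar j))) ∈
          ((Pg.zipIdx.map Prod.swap).filter (fun jc => jc.2.head.pred == a.pred)).map
            (fun jc => ASP.PForm.imp (TR.av (.k jc.1 a.args)) (TR.av (.kbar jc.1))) :=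
        List.mem_map.mpr ⟨(j, c), List.mem_filter.mpr ⟨hj, by simp [hh]⟩, rfl⟩
      have hprem := hall _ hmem
      refine hprem ⟨c, hj, by rw [hh]⟩ ⟨c, hj, hh ▸ hquest, fun b hb => ?_, hneg⟩
      refine ⟨?_, (hpos b hb).2.trans_le (by rw [hh])⟩
      have := (hpos b hb).1; rwa [← hMI] at this
    · -- ax7
      obtain ⟨⟨j, c⟩, hjc, a, haB, hpred, hargs, rfl⟩ := h
      intro hk
      obtain ⟨c', hc', he⟩ := hk
      have hce : c' = c := enum_fun hc' hjc
      subst hce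
      exact absurd he hargs
    · -- ax10
      obtain ⟨⟨j, c⟩, hjc, b, hb, rfl⟩ := h
      intro hk hX hgood
      obtain ⟨c', hc', hheadM, hposc, hnegc⟩ := hgood
      have hce : c' = c := enum_fun hc' hjc
      subst hce
      have hbM := hposc b hb
      exact hX hbM.1 ⟨hheadM, hbM.1, hbM.2⟩
    · -- ax11
      obtain ⟨⟨j, c⟩, hjc, s, hs, rfl⟩ := h
      intro hk hsM hgood
      obtain ⟨c', hc', hheadM, hposc, hnegc⟩ := hgood
      have hce : c' = c := enum_fun hc' hjc
      subst hce
      exact hnegc s hs hsM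
    · -- ax12
      obtain ⟨a, _, b, _, c, _, rfl⟩ := h
      intro h1 h2 h3
      exact h3 ⟨h1.1, h2.2.1, h2.2.2.trans h1.2.2⟩
    · -- ax13
      obtain ⟨a, _, rfl⟩ := h
      intro h1
      exact absurd h1.2.2 (lt_irrefl _)
  exact sound hprv hax

end PF

namespace PF
open ASP TR Classical

/-- Positive body atoms of the program. -/
def PB (Pg : List (ASP.GClause TR.GA)) : Finset TR.GA :=
  (Pg.flatMap (fun c => c.pos)).toFinset

/-- All relevant atoms: ω, heads, positive and negative body atoms. -/
def Hlist (Pg : List (ASP.GClause TR.GA)) (ω : TR.GA) : List TR.GA :=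
  ω :: Pg.flatMap (fun c => c.head :: (c.pos ++ c.neg))

theorem Hlist_sub {Pg : List (ASP.GClause TR.GA)} {B : Set TR.GA} {ω : TR.GA}
    (hW : TR.WfProg Pg B) (hω : ω ∈ B) : ∀ a ∈ Hlist Pg ω, a ∈ B := by
  intro a ha
  rcases List.mem_cons.mp ha with rfl | ha
  · exact hω
  · obtain ⟨c, hc, hm⟩ := List.mem_flatMap.mp ha
    obtain ⟨h1, h2, h3⟩ := hW c hc
    rcases List.mem_cons.mp hm with rfl | hm
    · exact h1
    · rcases List.mem_append.mp hm with hm | hm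
      · exact h2 a hm
      · exact h3 a hm

theorem omega_mem_Hlist (Pg : List (ASP.GClause TR.GA)) (ω : TR.GA) :
    ω ∈ Hlist Pg ω := List.mem_cons_self

theorem head_mem_Hlist {Pg : List (ASP.GClause TR.GA)} {ω : TR.GA} {c : ASP.GClause TR.GA}
    (hc : c ∈ Pg) : c.head ∈ Hlist Pg ω :=
  List.mem_cons_of_mem _ (List.mem_flatMap.mpr ⟨c, hc, List.mem_cons_self⟩)

theorem neg_mem_Hlist {Pg : List (ASP.GClause TR.GA)} {ω : TR.GA} {c : ASP.GClause TR.GA}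
    (hc : c ∈ Pg) {s : TR.GA} (hs : s ∈ c.neg) : s ∈ Hlist Pg ω :=
  List.mem_cons_of_mem _ (List.mem_flatMap.mpr
    ⟨c, hc, List.mem_cons_of_mem _ (List.mem_append_right _ hs)⟩)

/-- Case-splitting over a finite list of atoms using the axioms (1). -/
theorem split (B : Set TR.GA) :
    ∀ (L : List TR.GA), (∀ a ∈ L, a ∈ B) → ∀ (Γ : Set TR.F), TR.ax1 B ⊆ Γ →
    (∀ T : Set TR.GA,
      ASP.PPrv (Γ ∪ {f | ∃ a, (a ∈ L ∧ a ∈ T) ∧ f = TR.av (TR.At.pos a)}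
                  ∪ {f | ∃ a, (a ∈ L ∧ a ∉ T) ∧ f = TR.av (TR.At.bar a)}) (TR.av TR.At.lup)) →
    ASP.PPrv Γ (TR.av TR.At.lup) := by
  intro L
  induction L with
  | nil =>
    intro _ Γ _ h
    refine mono (h ∅) ?_
    rintro f ((hf | ⟨a, ⟨ha, _⟩, _⟩) | ⟨a, ⟨ha, _⟩, _⟩)
    · exact hf
    · exact absurd ha List.not_mem_nil
    · exact absurd ha List.not_mem_nil
  | cons a L ih =>
    intro hL Γ hΓ h
    have hx : (ASP.PForm.imp (.imp (TR.av (.pos a)) (TR.av .lup))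
        (.imp (.imp (TR.av (.bar a)) (TR.av .lup)) (TR.av .lup))) ∈ Γ :=
      hΓ ⟨a, hL a (List.mem_cons_self), rfl⟩
    refine ASP.PPrv.impE (ASP.PPrv.impE (.ax hx) (.impI ?_)) (.impI ?_)
    · -- assume pos a
      refine ih (fun x hx => hL x (List.mem_cons_of_mem _ hx)) _
        (fun f hf => Set.mem_insert_iff.mpr (Or.inr (hΓ hf))) (fun T => ?_)
      refine mono (h (insert a T)) ?_
      rintro f ((hf | ⟨x, ⟨hxL, hxT⟩, rfl⟩) | ⟨x, ⟨hxL, hxT⟩, rfl⟩)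
      · exact Or.inl (Or.inl (Set.mem_insert_iff.mpr (Or.inr hf)))
      · rcases Set.mem_insert_iff.mp hxT with rfl | hxT
        · exact Or.inl (Or.inl (Set.mem_insert _ _))
        · rcases List.mem_cons.mp hxL with rfl | hxL
          · exact Or.inl (Or.inl (Set.mem_insert _ _))
          · exact Or.inl (Or.inr ⟨x, ⟨hxL, hxT⟩, rfl⟩)
      · have hxa : x ≠ a := fun e => hxT (e ▸ Set.mem_insert a T)
        rcases List.mem_cons.mp hxL with rfl | hxL
        · exact absurd rfl hxa
        · exact Or.inr ⟨x, ⟨hxL, fun hT => hxT (Set.mem_insert_iff.mpr (Or.inr hT))⟩, rfl⟩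
    · -- assume bar a
      refine ih (fun x hx => hL x (List.mem_cons_of_mem _ hx)) _
        (fun f hf => Set.mem_insert_iff.mpr (Or.inr (hΓ hf))) (fun T => ?_)
      refine mono (h (T \ {a})) ?_
      rintro f ((hf | ⟨x, ⟨hxL, hxT⟩, rfl⟩) | ⟨x, ⟨hxL, hxT⟩, rfl⟩)
      · exact Or.inl (Or.inl (Set.mem_insert_iff.mpr (Or.inr hf)))
      · have hxa : x ≠ a := hxT.2
        rcases List.mem_cons.mp hxL with rfl | hxL
        · exact absurd rfl hxa
        · exact Or.inl (Or.inr ⟨x, ⟨hxL, hxT.1⟩, rfl⟩)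
      · rcases List.mem_cons.mp hxL with rfl | hxL
        · exact Or.inl (Or.inl (Set.mem_insert _ _))
        · by_cases hxa : x = a
          · subst hxa; exact Or.inl (Or.inl (Set.mem_insert _ _))
          · refine Or.inr ⟨x, ⟨hxL, fun hT => hxT ⟨hT, hxa⟩⟩, rfl⟩

/-- Derivation of `bang a → •` for atoms `a` in the interpretation. -/
theorem bangAux (Pg : List (ASP.GClause TR.GA)) (B : Set TR.GA) (ω : TR.GA) (M : Set TR.GA)
    (Γ : Set TR.F) (hax : TR.Axioms Pg B ω ⊆ Γ)
    (hbar : ∀ c ∈ Pg, ∀ s ∈ c.neg, s ∉ M → TR.av (.bar s) ∈ Γ) :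
    ∀ n a, rank (TR.progSet Pg) M a < n → a ∈ ASP.interp (TR.progSet Pg) M →
      ASP.PPrv Γ (.imp (TR.av (.bang a)) (TR.av .bullet)) := by
  intro n
  induction n with
  | zero => exact fun a h => absurd h (Nat.not_lt_zero _)
  | succ n ih =>
    intro a hr ha
    obtain ⟨c, hc, hh, hpos, hneg⟩ := interp_spec ha
    refine ASP.PPrv.impI ?_
    have hclax : TR.clax c ∈ Γ := hax (ax5_sub Pg B ω ⟨c, hc, rfl⟩)
    have hclax' : (ASP.PForm.imp (TR.av (.bang a))
        (TR.imps (c.pos.map (fun b => .imp (TR.av (.bang b)) (TR.av .bullet)) ++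
           c.neg.map (fun s => TR.av (.bar s))) (TR.av .bullet))) ∈ Γ := by
      rw [TR.clax, hh] at hclax; exact hclax
    refine imps_elim (ASP.PPrv.impE (.ax (Set.mem_insert_iff.mpr (Or.inr hclax')))
      (.ax (Set.mem_insert _ _))) ?_
    intro f hf
    rcases List.mem_append.mp hf with hf | hf
    · obtain ⟨b, hb, rfl⟩ := List.mem_map.mp hf
      have := hpos b hb
      exact mono (ih b (by omega) this.1) (Set.subset_insert _ _)
    · obtain ⟨s, hs, rfl⟩ := List.mem_map.mp hf
      exact .ax (Set.mem_insert_iff.mpr (Or.inr (hbar c hc s hs (hneg s hs))))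

end PF

namespace PF
open ASP TR Classical

theorem questAux (Pg : List (ASP.GClause TR.GA)) (B : Set TR.GA) (ω : TR.GA) (M : Set TR.GA)
    (hW : TR.WfProg Pg B) (Γ₀ : Set TR.F)
    (hax : TR.Axioms Pg B ω ⊆ Γ₀)
    (hposl : ∀ s ∈ M, TR.av (TR.At.pos s) ∈ Γ₀) :
    ∀ n (V : Finset TR.GA) (a : TR.GA) (Γ : Set TR.F),
      (PB Pg \ V).card ≤ n → a ∈ B → a ∉ ASP.interp (TR.progSet Pg) M → a ∈ V →
      (∀ x ∈ V, x ∈ B) → Γ₀ ⊆ Γ →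
      (∀ x ∈ V, ∀ Δ : Set TR.F, Γ ⊆ Δ → TR.av (TR.At.mem a x) ∈ Δ →
        ASP.PPrv Δ (TR.av TR.At.circ)) →
      ASP.PPrv Γ (.imp (TR.av (TR.At.quest a)) (TR.av TR.At.circ)) := by
  intro n
  induction n using Nat.strong_induction_on with
  | _ n ihn =>
  intro V a Γ hcard haB haI haV hVB hΓ hinv
  refine ASP.PPrv.impI ?_
  have hax6 : (ASP.PForm.imp (TR.av (TR.At.quest a))
      (TR.imps (((Pg.zipIdx.map Prod.swap).filter (fun jc => jc.2.head.pred == a.pred)).map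
        (fun jc => ASP.PForm.imp (TR.av (TR.At.k jc.1 a.args)) (TR.av (TR.At.kbar jc.1))))
        (TR.av TR.At.circ))) ∈ Γ₀ := hax (ax6_sub Pg B ω ⟨a, haB, rfl⟩)
  refine imps_elim (ASP.PPrv.impE (.ax (Set.mem_insert_iff.mpr (Or.inr (hΓ hax6))))
    (.ax (Set.mem_insert _ _))) ?_
  intro f hf
  obtain ⟨⟨j, c⟩, hjc, rfl⟩ := List.mem_map.mp hf
  have hjc' := List.mem_filter.mp hjc
  have henum : (j, c) ∈ (Pg.zipIdx.map Prod.swap) := hjc'.1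
  have hpred : c.head.pred = a.pred := by simpa using hjc'.2
  have hcPg : c ∈ Pg := enum_mem henum
  refine ASP.PPrv.impI ?_
  by_cases hargs : a.args = c.head.args
  · -- the clause head is exactly a
    have haeq : a = c.head := GA_ext hpred.symm hargs
    have hnofire : ¬ ((∀ b ∈ c.pos, b ∈ ASP.interp (TR.progSet Pg) M) ∧
        (∀ s ∈ c.neg, s ∉ M)) := by
      rintro ⟨h1, h2⟩
      apply haI
      rw [ASP.interp, ← OrderHom.map_lfp]
      exact Or.inr ⟨c, hcPg, haeq.symm, h1, h2⟩
    by_cases hneg : ∀ s ∈ c.neg, s ∉ M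
    · -- some positive body atom is outside the interpretation: use axiom (10)
      have hexb : ∃ b ∈ c.pos, b ∉ ASP.interp (TR.progSet Pg) M := by
        by_contra hb
        push_neg at hb
        exact hnofire ⟨hb, hneg⟩
      obtain ⟨b, hbpos, hbI⟩ := hexb
      have hbB : b ∈ B := (hW c hcPg).2.1 b hbpos
      have hax10 : (ASP.PForm.imp (TR.av (TR.At.k j c.head.args))
          (.imp (.imp (TR.av (TR.At.quest b)) (.imp (TR.av (TR.At.mem c.head b))
            (TR.av TR.At.circ))) (TR.av (TR.At.kbar j)))) ∈ Γ₀ :=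
        hax (ax10_sub Pg B ω ⟨(j, c), henum, b, hbpos, rfl⟩)
      rw [← haeq] at hax10
      refine ASP.PPrv.impE (ASP.PPrv.impE
        (.ax (Set.mem_insert_iff.mpr (Or.inr (Set.mem_insert_iff.mpr (Or.inr (hΓ hax10))))))
        (.ax (Set.mem_insert _ _))) ?_
      refine ASP.PPrv.impI (ASP.PPrv.impI ?_)
      by_cases hbV : b ∈ V
      · refine hinv b hbV _ ?_ (Set.mem_insert _ _)
        intro g hg
        exact Set.mem_insert_iff.mpr (Or.inr (Set.mem_insert_iff.mpr (Or.inr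
          (Set.mem_insert_iff.mpr (Or.inr (Set.mem_insert_iff.mpr (Or.inr hg)))))))
      · -- recurse on b with the enlarged visited set
        have hbPB : b ∈ PB Pg := by
          simp only [PB, List.mem_toFinset, List.mem_flatMap]
          exact ⟨c, hcPg, hbpos⟩
        have hcard' : (PB Pg \ insert b V).card < n := by
          have h1 : (PB Pg \ insert b V).card < (PB Pg \ V).card := by
            apply Finset.card_lt_card
            constructor
            · intro x hx
              simp only [Finset.mem_sdiff, Finset.mem_insert] at hx ⊢
              exact ⟨hx.1, fun h => hx.2 (Or.inr h)⟩
            · intro hsub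
              have := hsub (Finset.mem_sdiff.mpr ⟨hbPB, hbV⟩)
              simp at this
          omega
        have hΓsub : Γ ⊆ insert (TR.av (TR.At.mem a b)) (insert (TR.av (TR.At.quest b))
            (insert (TR.av (TR.At.k j a.args)) (insert (TR.av (TR.At.quest a)) Γ))) := by
          intro g hg
          exact Set.mem_insert_iff.mpr (Or.inr (Set.mem_insert_iff.mpr (Or.inr
            (Set.mem_insert_iff.mpr (Or.inr (Set.mem_insert_iff.mpr (Or.inr hg)))))))
        have hq := ihn ((PB Pg \ insert b V).card) hcard' (insert b V) b _ le_rfl hbB hbI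
          (Finset.mem_insert_self _ _)
          (by
            intro x hx
            rcases Finset.mem_insert.mp hx with rfl | hx
            · exact hbB
            · exact hVB x hx)
          (hΓ.trans hΓsub)
          (by
            intro x hx Δ hΔ hmem
            rcases Finset.mem_insert.mp hx with he | hx
            · -- mem b b : loop axiom (13)
              rw [he] at hmem
              have hax13 : (ASP.PForm.imp (TR.av (TR.At.mem b b)) (TR.av TR.At.circ)) ∈ Γ₀ :=
                hax (ax13_sub Pg B ω ⟨b, hbB, rfl⟩)
              exact ASP.PPrv.impE (.ax (hΔ (hΓsub (hΓ hax13)))) (.ax hmem)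
            · -- transitivity axiom (12) then the old invariant
              have hax12 : (ASP.PForm.imp (TR.av (TR.At.mem a b)) (.imp (TR.av (TR.At.mem b x))
                  (.imp (.imp (TR.av (TR.At.mem a x)) (TR.av TR.At.circ)) (TR.av TR.At.circ)))) ∈ Γ₀ :=
                hax (ax12_sub Pg B ω ⟨a, haB, b, hbB, x, hVB x hx, rfl⟩)
              refine ASP.PPrv.impE (ASP.PPrv.impE (ASP.PPrv.impE
                (.ax (hΔ (hΓsub (hΓ hax12)))) (.ax (hΔ (Set.mem_insert _ _)))) (.ax hmem))
                (ASP.PPrv.impI ?_)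
              refine hinv x hx _ ?_ (Set.mem_insert _ _)
              intro g hg
              exact Set.mem_insert_iff.mpr (Or.inr (hΔ (hΓsub hg))))
        exact ASP.PPrv.impE hq (.ax (Set.mem_insert_iff.mpr (Or.inr (Set.mem_insert _ _))))
    · -- some negative body atom is in M: use axiom (11)
      push_neg at hneg
      obtain ⟨s, hs, hsM⟩ := hneg
      have hax11 : (ASP.PForm.imp (TR.av (TR.At.k j c.head.args))
          (.imp (TR.av (TR.At.pos s)) (TR.av (TR.At.kbar j)))) ∈ Γ₀ :=
        hax (ax11_sub Pg B ω ⟨(j, c), henum, s, hs, rfl⟩)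
      rw [← hargs] at hax11
      exact ASP.PPrv.impE (ASP.PPrv.impE
        (.ax (Set.mem_insert_iff.mpr (Or.inr (Set.mem_insert_iff.mpr (Or.inr (hΓ hax11))))))
        (.ax (Set.mem_insert _ _)))
        (.ax (Set.mem_insert_iff.mpr (Or.inr (Set.mem_insert_iff.mpr (Or.inr (hΓ (hposl s hsM)))))))
  · -- argument mismatch: use axiom (7)
    have hax7 : (ASP.PForm.imp (TR.av (TR.At.k j a.args)) (TR.av (TR.At.kbar j))) ∈ Γ₀ :=
      hax (ax7_sub Pg B ω ⟨(j, c), henum, a, haB, hpred.symm, hargs, rfl⟩)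
    exact ASP.PPrv.impE
      (.ax (Set.mem_insert_iff.mpr (Or.inr (Set.mem_insert_iff.mpr (Or.inr (hΓ hax7))))))
      (.ax (Set.mem_insert _ _))

end PF

namespace PF
open ASP TR Classical

theorem branch (Pg : List (ASP.GClause TR.GA)) (B : Set TR.GA) (ω : TR.GA)
    (hW : TR.WfProg Pg B) (hω : ω ∈ B)
    (hent : ∀ M : Set TR.GA, M ⊆ B → ASP.IsStable (TR.progSet Pg) M → ω ∈ M)
    (T : Set TR.GA) :
    ASP.PPrv (TR.Axioms Pg B ω
        ∪ {f | ∃ a, (a ∈ Hlist Pg ω ∧ a ∈ T) ∧ f = TR.av (TR.At.pos a)}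
        ∪ {f | ∃ a, (a ∈ Hlist Pg ω ∧ a ∉ T) ∧ f = TR.av (TR.At.bar a)})
      (TR.av TR.At.lup) := by
  set M : Set TR.GA := {x | x ∈ Hlist Pg ω ∧ x ∈ T} with hM
  set Γ : Set TR.F := TR.Axioms Pg B ω
      ∪ {f | ∃ a, (a ∈ Hlist Pg ω ∧ a ∈ T) ∧ f = TR.av (TR.At.pos a)}
      ∪ {f | ∃ a, (a ∈ Hlist Pg ω ∧ a ∉ T) ∧ f = TR.av (TR.At.bar a)} with hΓdef
  have haxΓ : TR.Axioms Pg B ω ⊆ Γ := fun f hf => Or.inl (Or.inl hf)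
  have hposΓ : ∀ x ∈ M, TR.av (TR.At.pos x) ∈ Γ := fun x hx => Or.inl (Or.inr ⟨x, hx, rfl⟩)
  have hbarΓ : ∀ x, x ∈ Hlist Pg ω → x ∉ M → TR.av (TR.At.bar x) ∈ Γ :=
    fun x h1 h2 => Or.inr ⟨x, ⟨h1, fun hT => h2 ⟨h1, hT⟩⟩, rfl⟩
  have hMB : M ⊆ B := fun x hx => Hlist_sub hW hω x hx.1
  by_cases hωM : ω ∈ M
  · have h2 : (ASP.PForm.imp (TR.av (TR.At.pos ω)) (TR.av TR.At.lup)) ∈ Γ :=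
      haxΓ (ax2_sub Pg B ω (Set.mem_insert _ _))
    exact ASP.PPrv.impE (.ax h2) (.ax (hposΓ ω hωM))
  · have hnst : M ≠ ASP.interp (TR.progSet Pg) M := fun h => hωM (hent M hMB h)
    by_cases hun : ∃ x, x ∈ ASP.interp (TR.progSet Pg) M ∧ x ∉ M
    · -- unsound: derive A
      obtain ⟨x, hxI, hxM⟩ := hun
      obtain ⟨c, hc, hh⟩ := interp_subset_heads (TR.progSet Pg) M hxI
      have hcPg : c ∈ Pg := hc
      have hxB : x ∈ B := hh ▸ (hW c hcPg).1
      have hxH : x ∈ Hlist Pg ω := hh ▸ head_mem_Hlist hcPg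
      have hbang := bangAux Pg B ω M Γ haxΓ
        (fun c hc s hs hsM => hbarΓ s (neg_mem_Hlist hc hs) hsM)
        (rank (TR.progSet Pg) M x + 1) x (Nat.lt_succ_self _) hxI
      have hax3 : (ASP.PForm.imp (TR.av (TR.At.bar x)) (.imp (.imp (TR.av (TR.At.bang x))
          (TR.av TR.At.bullet)) (TR.av TR.At.unsound))) ∈ Γ :=
        haxΓ (ax3_sub Pg B ω ⟨x, hxB, rfl⟩)
      have hA : ASP.PPrv Γ (TR.av TR.At.unsound) :=
        .impE (.impE (.ax hax3) (.ax (hbarΓ x hxH hxM))) hbang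
      have h2 : (ASP.PForm.imp (TR.av TR.At.unsound) (TR.av TR.At.lup)) ∈ Γ :=
        haxΓ (ax2_sub Pg B ω (Set.mem_insert_iff.mpr (Or.inr (Set.mem_insert _ _))))
      exact ASP.PPrv.impE (.ax h2) hA
    · -- incomplete: derive B
      push_neg at hun
      have hex : ∃ x ∈ M, x ∉ ASP.interp (TR.progSet Pg) M := by
        by_contra h
        push_neg at h
        exact hnst (Set.Subset.antisymm h hun)
      obtain ⟨x, hxM, hxI⟩ := hex
      have hxB : x ∈ B := hMB hxM
      have hq := questAux Pg B ω M hW Γ haxΓ hposΓ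
        ((PB Pg \ {x}).card) {x} x Γ le_rfl hxB hxI (Finset.mem_singleton_self x)
        (by intro y hy; rw [Finset.mem_singleton] at hy; exact hy ▸ hxB)
        subset_rfl
        (by
          intro y hy Δ hΔ hmem
          rw [Finset.mem_singleton] at hy
          rw [hy] at hmem
          have hax13 : (ASP.PForm.imp (TR.av (TR.At.mem x x)) (TR.av TR.At.circ)) ∈ Γ :=
            haxΓ (ax13_sub Pg B ω ⟨x, hxB, rfl⟩)
          exact ASP.PPrv.impE (.ax (hΔ hax13)) (.ax hmem))
      have hax4 : (ASP.PForm.imp (TR.av (TR.At.pos x)) (.imp (.imp (TR.av (TR.At.quest x))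
          (TR.av TR.At.circ)) (TR.av TR.At.incomplete))) ∈ Γ :=
        haxΓ (ax4_sub Pg B ω ⟨x, hxB, rfl⟩)
      have hB : ASP.PPrv Γ (TR.av TR.At.incomplete) :=
        .impE (.impE (.ax hax4) (.ax (hposΓ x hxM))) hq
      have h2 : (ASP.PForm.imp (TR.av TR.At.incomplete) (TR.av TR.At.lup)) ∈ Γ :=
        haxΓ (ax2_sub Pg B ω (Set.mem_insert_iff.mpr (Or.inr
          (Set.mem_insert_iff.mpr (Or.inr rfl)))))
      exact ASP.PPrv.impE (.ax h2) hB

end PF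


/-- The translated formula φ = ψ₁ → ⋯ → ψ_d → ⊙ is provable (equivalently, ⊙
is derivable from the axioms ψ₁,…,ψ_d) iff P entails Ω under stable model
semantics. -/
theorem stmt13 (Pg : List (ASP.GClause TR.GA)) (B : Set TR.GA) (ω : TR.GA)
    (hW : TR.WfProg Pg B) (hω : ω ∈ B) :
    ASP.PPrv (TR.Axioms Pg B ω) (TR.av .lup) ↔
      ∀ M : Set TR.GA, M ⊆ B → ASP.IsStable (TR.progSet Pg) M → ω ∈ M := by
  constructor
  · intro hprv M _ hst
    by_contra hωM
    exact PF.forward Pg B ω hprv M hst hωM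
  · intro hent
    exact PF.split B (PF.Hlist Pg ω) (PF.Hlist_sub hW hω) (TR.Axioms Pg B ω)
      (PF.ax1_sub Pg B ω) (PF.branch Pg B ω hW hω hent)
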